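/- arXiv:2104.07274 — 3 statements merged into one kernel-verified Lean document; each statement's English description precedes it below -/
import Mathlib

section
/- The number of dominating equivalence classes of compositions of k equals p(k) − p(k−2), the number of integer partitions of k with no part equal to 2, where p denotes the partition function (with p(k−2) = 0 for k < 2). -/
/-- `l` is a composition of `n`: a list of positive integers summing to `n`. -/
def IsComposition (n : ℕ) (l : List ℕ) : Prop :=
  (∀ x ∈ l, 0 < x) ∧ l.sum = n

/-- `b` dominates `a`: `b` has a subsequence whose terms are entrywise at least those of `a`. -/
def Dominates (b a : List ℕ) : Prop :=
  ∃ b' : List ℕ, b'.Sublist b ∧ List.Forall₂ (· ≤ ·) a b'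

/-- `D_n(a)`: the set of compositions of `n` dominating `a`. -/
def domSet (n : ℕ) (a : List ℕ) : Set (List ℕ) :=
  {b | IsComposition n b ∧ Dominates b a}

namespace DomProof

lemma dominates_nil (b : List ℕ) : Dominates b [] :=
  ⟨[], List.nil_sublist b, List.Forall₂.nil⟩

lemma dominates_refl (a : List ℕ) : Dominates a a :=
  ⟨a, List.Sublist.refl a, List.forall₂_same.2 fun _ _ => le_refl _⟩

/-- the remaining target after reading one part `m` of the dominating composition. -/
def step (m : ℕ) : List ℕ → List ℕ
  | [] => []
  | h :: t => if m < h then h :: t else t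

lemma dominates_cons_iff (m : ℕ) (l a : List ℕ) :
    Dominates (m :: l) a ↔ Dominates l (step m a) := by
  match a with
  | [] => simp [dominates_nil, step]
  | h :: t =>
    simp only [step]
    by_cases hm : m < h
    · rw [if_pos hm]
      constructor
      · rintro ⟨b', hb', hf⟩
        rcases List.sublist_cons_iff.1 hb' with hb' | ⟨r, rfl, hr⟩
        · exact ⟨b', hb', hf⟩
        · rcases hf with _ | ⟨hle, hf⟩
          omega
      · rintro ⟨b', hb', hf⟩
        exact ⟨b', hb'.trans (List.sublist_cons_self m l), hf⟩
    · rw [if_neg hm]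
      constructor
      · rintro ⟨b', hb', hf⟩
        rcases List.sublist_cons_iff.1 hb' with hb' | ⟨r, rfl, hr⟩
        · obtain ⟨c, cs, hle, hf2, rfl⟩ := List.forall₂_cons_left_iff.1 hf
          exact ⟨cs, (List.sublist_cons_self c cs).trans hb', hf2⟩
        · rcases hf with _ | ⟨hle, hf⟩
          exact ⟨r, hr, hf⟩
      · rintro ⟨b', hb', hf⟩
        exact ⟨m :: b', hb'.cons₂ m, List.Forall₂.cons (by omega) hf⟩

lemma domSet_finite (n : ℕ) (a : List ℕ) : (domSet n a).Finite := by
  have h : domSet n a ⊆ Set.range (fun c : Composition n => c.blocks) := by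
    rintro b ⟨⟨h1, h2⟩, -⟩
    exact ⟨⟨b, @fun i hi => h1 i hi, h2⟩, rfl⟩
  exact (Set.finite_range _).subset h

/-- the count `|D_N(a)|`. -/
noncomputable def d (N : ℕ) (a : List ℕ) : ℕ := (domSet N a).ncard

lemma d_zero_nil : d 0 [] = 1 := by
  have : domSet 0 [] = {[]} := by
    ext b
    constructor
    · rintro ⟨⟨h1, h2⟩, -⟩
      have : b = [] := by
        cases b with
        | nil => rfl
        | cons x xs => exact absurd h2 (by have := h1 x (by simp); simp; omega)
      simp [this]
    · rintro rfl
      exact ⟨⟨by simp, by simp⟩, dominates_nil _⟩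
  simp [d, this]

lemma d_zero_cons (h : ℕ) (t : List ℕ) : d 0 (h :: t) = 0 := by
  have : domSet 0 (h :: t) = ∅ := by
    ext b
    simp only [domSet, Set.mem_setOf_eq, Set.mem_empty_iff_false, iff_false, not_and]
    rintro ⟨h1, h2⟩ ⟨b', hb', hf⟩
    have hb : b = [] := by
      cases b with
      | nil => rfl
      | cons x xs => exact absurd h2 (by have := h1 x (by simp); simp; omega)
    subst hb
    rcases List.sublist_nil.1 hb' with rfl
    cases hf
  simp [d, this]

lemma d_pos_of_isComposition {k : ℕ} {a : List ℕ} (h : IsComposition k a) : 0 < d k a := by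
  rw [d, Set.ncard_pos (domSet_finite k a)]
  exact ⟨a, h, dominates_refl a⟩

/-- decomposition of `domSet` by the first part. -/
lemma domSet_decomp (N : ℕ) (hN : 0 < N) (a : List ℕ) :
    domSet N a = ⋃ m ∈ Finset.Icc 1 N, (m :: ·) '' domSet (N - m) (step m a) := by
  ext b
  simp only [Set.mem_iUnion, Set.mem_image, exists_prop, Finset.mem_Icc]
  constructor
  · rintro ⟨⟨h1, h2⟩, hd⟩
    cases b with
    | nil => simp at h2; omega
    | cons m l =>
      have hm1 : 0 < m := h1 m (by simp)
      have hml : m + l.sum = N := by simpa using h2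
      refine ⟨m, ⟨hm1, by omega⟩, l, ⟨⟨fun x hx => h1 x (by simp [hx]), by omega⟩, ?_⟩, rfl⟩
      exact (dominates_cons_iff m l a).1 hd
  · rintro ⟨m, ⟨hm1, hmN⟩, l, ⟨⟨h1, h2⟩, hd⟩, rfl⟩
    refine ⟨⟨?_, ?_⟩, (dominates_cons_iff m l a).2 hd⟩
    · rintro x hx
      rcases List.mem_cons.1 hx with rfl | hx
      · exact hm1
      · exact h1 x hx
    · simp [h2]; omega

/-- the recurrence for `d`. -/
lemma d_rec (N : ℕ) (a : List ℕ) (hN : 0 < N) :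
    d N a = ∑ m ∈ Finset.Icc 1 N, d (N - m) (step m a) := by
  classical
  have hfin : ∀ m, ((m :: ·) '' domSet (N - m) (step m a)).Finite :=
    fun m => (domSet_finite _ _).image _
  have hset : domSet N a = ↑((Finset.Icc 1 N).biUnion fun m => (hfin m).toFinset) := by
    rw [domSet_decomp N hN a, Finset.coe_biUnion]
    simp [Set.Finite.coe_toFinset]
  have hcard : ((Finset.Icc 1 N).biUnion fun m => (hfin m).toFinset).card =
      ∑ m ∈ Finset.Icc 1 N, ((hfin m).toFinset).card := by
    apply Finset.card_biUnion
    intro x _ y _ hxy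
    simp only [Finset.disjoint_left, Set.Finite.mem_toFinset]
    rintro b ⟨l1, -, rfl⟩ ⟨l2, -, hl⟩
    exact hxy (List.cons.injEq .. ▸ hl).1.symm
  rw [d, hset, Set.ncard_coe_finset, hcard]
  apply Finset.sum_congr rfl
  intro m _
  rw [← Set.ncard_coe_finset, Set.Finite.coe_toFinset,
    Set.ncard_image_of_injective _ (fun x y hxy => (List.cons.injEq .. ▸ hxy).2), d]


section Series

open PowerSeries

/-- generating function of `d · a`. -/
noncomputable def Dser (a : List ℕ) : PowerSeries ℤ := PowerSeries.mk fun N => (d N a : ℤ)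

/-- the all-ones series `1/(1-X)`. -/
noncomputable def U : PowerSeries ℤ := PowerSeries.mk fun _ => (1 : ℤ)

lemma one_sub_X_mul_U : ((1 : PowerSeries ℤ) - X) * U = 1 := by
  have : ((1 : PowerSeries ℤ) - X) * U = U - X * U := by ring
  rw [this]
  ext N
  cases N with
  | zero => simp [U, coeff_zero_eq_constantCoeff, map_sub]
  | succ n => simp [U, map_sub, coeff_succ_X_mul, coeff_mk, coeff_one]

lemma coeff_U_mul (φ : PowerSeries ℤ) (M : ℕ) :
    (PowerSeries.coeff M) (U * φ) = ∑ j ∈ Finset.range (M + 1), (PowerSeries.coeff j) φ := by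
  rw [coeff_mul, Finset.Nat.sum_antidiagonal_eq_sum_range_succ_mk]
  have : ∀ k ∈ Finset.range (M + 1),
      (PowerSeries.coeff k) U * (PowerSeries.coeff (M - k)) φ
        = (PowerSeries.coeff (M - k)) φ := by
    intro k _
    simp [U, coeff_mk]
  rw [Finset.sum_congr rfl this]
  exact Finset.sum_range_reflect (fun j => (PowerSeries.coeff j) φ) (M + 1)

lemma Dser_nil_rec : Dser [] = X * (U * Dser []) + 1 := by
  ext N
  rw [map_add]
  cases N with
  | zero => simp [Dser, coeff_mk, d_zero_nil, coeff_zero_eq_constantCoeff]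
  | succ n =>
    rw [coeff_succ_X_mul, coeff_U_mul]
    have hrec := d_rec (n + 1) [] (Nat.succ_pos n)
    have hstep : ∀ m, step m [] = [] := fun m => rfl
    simp only [hstep] at hrec
    have : (coeff (n + 1)) (1 : PowerSeries ℤ) = 0 := by simp [coeff_one]
    rw [this, add_zero, Dser, coeff_mk, hrec]
    push_cast
    simp only [Dser, coeff_mk]
    apply Finset.sum_nbij' (fun m => n + 1 - m) (fun j => n + 1 - j) <;>
      simp +contextual <;> omega

lemma Dser_cons_rec (h : ℕ) (hh : 0 < h) (t : List ℕ) :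
    Dser (h :: t) = (∑ m ∈ Finset.Icc 1 (h - 1), (X : PowerSeries ℤ) ^ m) * Dser (h :: t)
      + X ^ h * (U * Dser t) := by
  ext N
  rw [map_add, Finset.sum_mul, map_sum]
  have h1 : ∀ m ∈ Finset.Icc 1 (h - 1),
      (coeff N) ((X : PowerSeries ℤ) ^ m * Dser (h :: t))
        = if m ≤ N then (d (N - m) (h :: t) : ℤ) else 0 := by
    intro m _
    rw [coeff_X_pow_mul']
    simp [Dser, coeff_mk]
  rw [Finset.sum_congr rfl h1, coeff_X_pow_mul', coeff_U_mul]
  cases N with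
  | zero =>
    have : ¬ h ≤ 0 := by omega
    rw [if_neg this]
    simp only [Dser, coeff_mk, d_zero_cons, Nat.cast_zero, add_zero]
    symm
    apply Finset.sum_eq_zero
    intro m hm
    simp only [Finset.mem_Icc] at hm
    rw [if_neg (by omega)]
  | succ n =>
    set N := n + 1 with hN
    have hrec := d_rec N (h :: t) (Nat.succ_pos n)
    rw [Dser, coeff_mk, hrec]
    rw [← Finset.sum_filter_add_sum_filter_not (Finset.Icc 1 N) (· < h)]
    have e1 : (Finset.Icc 1 N).filter (· < h) = (Finset.Icc 1 (h - 1)).filter (· ≤ N) := by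
      ext m
      simp only [Finset.mem_filter, Finset.mem_Icc]
      omega
    have e2 : ∀ m ∈ (Finset.Icc 1 N).filter (· < h), d (N - m) (step m (h :: t)) = d (N - m) (h :: t) := by
      intro m hm
      simp only [Finset.mem_filter] at hm
      simp [step, hm.2]
    have e3 : (Finset.Icc 1 N).filter (¬ · < h) = Finset.Icc h N := by
      ext m
      simp only [Finset.mem_filter, Finset.mem_Icc]
      omega
    have e4 : ∀ m ∈ Finset.Icc h N, d (N - m) (step m (h :: t)) = d (N - m) t := by
      intro m hm
      simp only [Finset.mem_Icc] at hm
      simp [step, show ¬ m < h by omega]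
    rw [Finset.sum_congr e1 (by intro m hm; exact e2 m (e1 ▸ hm)),
        Finset.sum_congr e3 (by intro m hm; exact e4 m (e3 ▸ hm))]
    push_cast
    congr 1
    · rw [Finset.sum_filter]
    · by_cases hhN : h ≤ N
      · rw [if_pos hhN]
        simp only [Dser, coeff_mk]
        apply Finset.sum_nbij' (fun m => N - m) (fun j => N - j) <;>
          simp +contextual [Finset.mem_range, Finset.mem_Icc] <;> omega
      · rw [if_neg hhN, Finset.Icc_eq_empty (by omega), Finset.sum_empty]

lemma geom_sum_identity (n : ℕ) :
    ((1 : PowerSeries ℤ) - X) * ∑ m ∈ Finset.Icc 1 n, (X : PowerSeries ℤ) ^ m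
      = X - X ^ (n + 1) := by
  induction n with
  | zero => simp
  | succ n ih =>
    rw [Finset.sum_Icc_succ_top (by omega)]
    ring_nf
    ring_nf at ih
    linear_combination ih

lemma main_nil : ((1 : PowerSeries ℤ) - 2 * X) * Dser [] = 1 - X := by
  have eq1 := Dser_nil_rec
  have eq2 := one_sub_X_mul_U
  linear_combination (1 - (X : PowerSeries ℤ)) * eq1 + X * Dser [] * eq2

lemma main_cons (h : ℕ) (hh : 0 < h) (t : List ℕ) :
    ((1 : PowerSeries ℤ) - 2 * X + X ^ h) * Dser (h :: t) = X ^ h * Dser t := by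
  have eq1 := Dser_cons_rec h hh t
  have eq2 := one_sub_X_mul_U
  have eq3 := geom_sum_identity (h - 1)
  rw [show h - 1 + 1 = h by omega] at eq3
  linear_combination (1 - (X : PowerSeries ℤ)) * eq1 + Dser (h :: t) * eq3
    + X ^ h * Dser t * eq2

/-- the power-series factor attached to a part. -/
noncomputable def fps (m : ℕ) : PowerSeries ℤ := 1 - 2 * X + X ^ m

/-- the characteristic series of a composition. -/
noncomputable def Cs (a : List ℕ) : PowerSeries ℤ := (a.map fps).prod

lemma key (a : List ℕ) (ha : ∀ x ∈ a, 0 < x) :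
    Cs a * Dser a = X ^ a.sum * Dser [] := by
  induction a with
  | nil => simp [Cs]
  | cons h t ih =>
    have hh : 0 < h := ha h (List.mem_cons_self)
    have ih' := ih fun x hx => ha x (List.mem_cons_of_mem h hx)
    have hm := main_cons h hh t
    rw [Cs, List.map_cons, List.prod_cons, List.sum_cons,
      show (List.map fps t).prod = Cs t from rfl, show fps h = 1 - 2 * X + X ^ h from rfl]
    rw [pow_add]
    linear_combination Cs t * hm + X ^ h * ih'

lemma constantCoeff_Cs (a : List ℕ) (ha : ∀ x ∈ a, 0 < x) :
    PowerSeries.constantCoeff (Cs a) = 1 := by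
  induction a with
  | nil => simp [Cs]
  | cons h t ih =>
    have hh : 0 < h := ha h (List.mem_cons_self)
    rw [Cs, List.map_cons, List.prod_cons, map_mul,
      show (List.map fps t).prod = Cs t from rfl,
      ih fun x hx => ha x (List.mem_cons_of_mem h hx)]
    rw [fps, map_add, map_sub, map_one, map_mul, map_pow, constantCoeff_X]
    simp [zero_pow (by omega : h ≠ 0)]

lemma Cs_ne_zero (a : List ℕ) (ha : ∀ x ∈ a, 0 < x) : Cs a ≠ 0 := by
  intro hzero
  have := constantCoeff_Cs a ha
  rw [hzero, map_zero] at this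
  exact one_ne_zero this.symm

lemma Dser_ne_zero {k : ℕ} {a : List ℕ} (h : IsComposition k a) : Dser a ≠ 0 := by
  intro hzero
  have hd : (PowerSeries.coeff k) (Dser a) = d k a := by simp [Dser, coeff_mk]
  rw [hzero, map_zero] at hd
  have := d_pos_of_isComposition h
  omega

lemma Dser_eq_of_Cs_eq {k : ℕ} {a b : List ℕ} (ha : IsComposition k a)
    (hb : IsComposition k b) (hC : Cs a = Cs b) : Dser a = Dser b := by
  have k1 := key a ha.1
  have k2 := key b hb.1
  rw [ha.2] at k1
  rw [hb.2] at k2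
  have : Cs a * Dser a = Cs a * Dser b := by rw [k1, hC, k2]
  exact mul_left_cancel₀ (Cs_ne_zero a ha.1) this

lemma Cs_eq_of_Dser_eq {k : ℕ} {a b : List ℕ} (ha : IsComposition k a)
    (hb : IsComposition k b) (hD : Dser a = Dser b) : Cs a = Cs b := by
  have k1 := key a ha.1
  have k2 := key b hb.1
  rw [ha.2] at k1
  rw [hb.2] at k2
  rw [hD] at k1
  have : Cs a * Dser b = Cs b * Dser b := by rw [k1, k2]
  exact mul_right_cancel₀ (Dser_ne_zero hb) this

end Series


section Poly

open Polynomial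

/-- the polynomial factor of a part. -/
noncomputable def fpoly (m : ℕ) : Polynomial ℤ := 1 - 2 * X + X ^ m

/-- `fpoly m` divided by `1 - X`. -/
noncomputable def gpoly (m : ℕ) : Polynomial ℤ := 1 - ∑ j ∈ Finset.Icc 1 (m - 1), X ^ j

/-- product of the factors over a multiset of parts. -/
noncomputable def CPm (A : Multiset ℕ) : Polynomial ℤ := (A.map fpoly).prod

/-- product of the reduced factors. -/
noncomputable def Gm (A : Multiset ℕ) : Polynomial ℤ := (A.map gpoly).prod

lemma poly_geom (n : ℕ) :
    ((1 : Polynomial ℤ) - X) * ∑ j ∈ Finset.Icc 1 n, (X : Polynomial ℤ) ^ j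
      = X - X ^ (n + 1) := by
  induction n with
  | zero => simp
  | succ n ih =>
    rw [Finset.sum_Icc_succ_top (by omega)]
    ring_nf
    ring_nf at ih
    linear_combination ih

lemma fpoly_eq (m : ℕ) (hm : 0 < m) : fpoly m = (1 - X) * gpoly m := by
  rw [fpoly, gpoly, mul_sub, poly_geom, show m - 1 + 1 = m by omega]
  ring

lemma gpoly_eval_one (m : ℕ) : (gpoly m).eval 1 = 1 - (m - 1 : ℕ) := by
  rw [gpoly]
  simp [eval_finset_sum]

lemma gpoly_eval_one_ne_zero {m : ℕ} (hm : m ≠ 2) : (gpoly m).eval 1 ≠ 0 := by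
  rw [gpoly_eval_one]
  omega

lemma CPm_eq (A : Multiset ℕ) (hA : ∀ m ∈ A, 0 < m) :
    CPm A = (1 - X) ^ Multiset.card A * Gm A := by
  induction A using Multiset.induction with
  | empty => simp [CPm, Gm]
  | cons m A ih =>
    have h1 := hA m (Multiset.mem_cons_self m A)
    have h2 := ih fun x hx => hA x (Multiset.mem_cons_of_mem hx)
    simp only [CPm, Gm, Multiset.map_cons, Multiset.prod_cons, Multiset.card_cons] at *
    rw [fpoly_eq m h1, h2, pow_succ]
    ring

lemma Gm_eval_one_ne_zero (A : Multiset ℕ) (hA : ∀ m ∈ A, m ≠ 2) :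
    (Gm A).eval 1 ≠ 0 := by
  induction A using Multiset.induction with
  | empty => simp [Gm]
  | cons m A ih =>
    rw [Gm, Multiset.map_cons, Multiset.prod_cons, show (A.map gpoly).prod = Gm A from rfl]
    rw [eval_mul]
    exact mul_ne_zero (gpoly_eval_one_ne_zero (hA m (Multiset.mem_cons_self m A)))
      (ih fun x hx => hA x (Multiset.mem_cons_of_mem hx))

/-- stripping common powers of `1 - X`. -/
lemma strip_one_sub_X : ∀ (r s : ℕ) (G H : Polynomial ℤ), G.eval 1 ≠ 0 → H.eval 1 ≠ 0 →
    (1 - X) ^ r * G = (1 - X) ^ s * H → r = s ∧ G = H := by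
  intro r
  induction r with
  | zero =>
    intro s G H hG hH heq
    cases s with
    | zero => simpa using heq
    | succ s =>
      exfalso
      apply hG
      have := congrArg (eval 1) heq
      simpa [pow_succ] using this
  | succ r ih =>
    intro s G H hG hH heq
    cases s with
    | zero =>
      exfalso
      apply hH
      have := congrArg (eval 1) heq
      simpa [pow_succ] using this.symm
    | succ s =>
      have hne : ((1 : Polynomial ℤ) - X) ≠ 0 := by
        intro hc
        have := congrArg (eval 0) hc
        simp at this
      rw [pow_succ, pow_succ] at heq
      have heq' : (1 - X) ^ r * G = (1 - X) ^ s * H := by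
        apply mul_left_cancel₀ hne
        ring_nf
        ring_nf at heq
        linear_combination heq
      obtain ⟨h1, h2⟩ := ih s G H hG hH heq'
      exact ⟨by omega, h2⟩


lemma coeff_mul_X_ite (P : Polynomial ℤ) (j : ℕ) :
    (P * X).coeff j = if 1 ≤ j then P.coeff (j - 1) else 0 := by
  have := Polynomial.coeff_mul_X_pow' P 1 j
  simpa using this

lemma constCoeff_CPm (A : Multiset ℕ) (hA : ∀ m ∈ A, 0 < m) : (CPm A).coeff 0 = 1 := by
  induction A using Multiset.induction with
  | empty => simp [CPm]
  | cons m A ih =>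
    have hm : 0 < m := hA m (Multiset.mem_cons_self m A)
    have ih' := ih fun x hx => hA x (Multiset.mem_cons_of_mem hx)
    simp only [CPm, Multiset.map_cons, Multiset.prod_cons] at *
    rw [Polynomial.mul_coeff_zero, ih', mul_one, fpoly]
    have hxm : ((X : Polynomial ℤ) ^ m).coeff 0 = 0 := by
      rw [Polynomial.coeff_X_pow, if_neg (by omega)]
    simp [hxm]

lemma constCoeff_one_sub_two_X_pow (c : ℕ) :
    (((1 : Polynomial ℤ) - 2 * X) ^ c).coeff 0 = 1 := by
  induction c with
  | zero => simp
  | succ c ih =>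
    rw [pow_succ, Polynomial.mul_coeff_zero, ih]
    simp

/-- Key coefficient computation: low-order coefficients of the product of factors. -/
lemma coeff_CPm (A : Multiset ℕ) (α : ℕ) (hα : 3 ≤ α) (hA : ∀ m ∈ A, α ≤ m) :
    ∀ j ≤ α, (CPm A).coeff j
      = (((1 : Polynomial ℤ) - 2 * X) ^ Multiset.card A).coeff j
        + if j = α then (A.count α : ℤ) else 0 := by
  induction A using Multiset.induction with
  | empty =>
    intro j hj
    simp [CPm]
  | cons m A ih =>
    intro j hj
    have hm : α ≤ m := hA m (Multiset.mem_cons_self m A)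
    have ih' := ih fun x hx => hA x (Multiset.mem_cons_of_mem hx)
    have hexp : CPm (m ::ₘ A) = CPm A - 2 * (CPm A * X) + CPm A * X ^ m := by
      simp only [CPm, Multiset.map_cons, Multiset.prod_cons, fpoly]
      ring
    have hexp2 : ((1 : Polynomial ℤ) - 2 * X) ^ (Multiset.card (m ::ₘ A))
        = (1 - 2 * X) ^ Multiset.card A - 2 * ((1 - 2 * X) ^ Multiset.card A * X) := by
      rw [Multiset.card_cons, pow_succ]
      ring
    rw [hexp, hexp2]
    simp only [Polynomial.coeff_add, Polynomial.coeff_sub, Polynomial.coeff_ofNat_mul,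
      coeff_mul_X_ite, Polynomial.coeff_mul_X_pow', Multiset.count_cons]
    rw [ih' j hj]
    by_cases hj1 : 1 ≤ j
    · rw [if_pos hj1, if_pos hj1, ih' (j - 1) (by omega)]
      rw [if_neg (by omega : ¬ j - 1 = α)]
      by_cases hmj : m ≤ j
      · have hjα : j = α := by omega
        have hmα : m = α := by omega
        rw [if_pos hmj]
        have hjm0 : j - m = 0 := by omega
        rw [hjm0, constCoeff_CPm A (fun x hx =>
          Nat.lt_of_lt_of_le (by omega) (hA x (Multiset.mem_cons_of_mem hx)))]
        rw [if_pos hjα, if_pos hjα, if_pos (by omega : α = m)]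
        push_cast
        ring
      · rw [if_neg hmj]
        by_cases hjα : j = α
        · rw [if_pos hjα, if_pos hjα, if_neg (by omega : ¬ α = m)]
          push_cast
          ring
        · rw [if_neg hjα, if_neg hjα]
          ring
    · rw [if_neg hj1, if_neg hj1, if_neg (by omega : ¬ m ≤ j), if_neg (by omega : ¬ j = α),
        if_neg (by omega : ¬ j = α)]
      ring

lemma coeff_one_sub_two_X_pow (c : ℕ) :
    (((1 : Polynomial ℤ) - 2 * X) ^ c).coeff 1 = (-2 : ℤ) * (c : ℤ) := by
  induction c with
  | zero => simp [Polynomial.coeff_one]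
  | succ c ih =>
    have hh : ((1 : Polynomial ℤ) - 2 * X) ^ (c + 1)
        = (1 - 2 * X) ^ c - 2 * ((1 - 2 * X) ^ c * X) := by
      rw [pow_succ]; ring
    rw [hh]
    simp only [Polynomial.coeff_sub, Polynomial.coeff_ofNat_mul, coeff_mul_X_ite]
    rw [ih, if_pos (by omega : 1 ≤ 1)]
    simp only [Nat.sub_self, constCoeff_one_sub_two_X_pow]
    push_cast
    ring

lemma card_eq_of_CPm_eq {A B : Multiset ℕ} (hA : ∀ m ∈ A, 3 ≤ m) (hB : ∀ m ∈ B, 3 ≤ m)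
    (h : CPm A = CPm B) : Multiset.card A = Multiset.card B := by
  have cA := coeff_CPm A 3 le_rfl hA 1 (by omega)
  have cB := coeff_CPm B 3 le_rfl hB 1 (by omega)
  rw [if_neg (by omega : ¬ (1:ℕ) = 3)] at cA cB
  rw [h, cB] at cA
  rw [coeff_one_sub_two_X_pow, coeff_one_sub_two_X_pow] at cA
  have : (Multiset.card A : ℤ) = Multiset.card B := by linarith
  exact_mod_cast this

lemma fpoly_ne_zero (m : ℕ) : fpoly m ≠ 0 := by
  intro h
  have h0 := congrArg (Polynomial.eval 0) h
  rcases Nat.eq_zero_or_pos m with rfl | hm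
  · simp [fpoly] at h0
  · rw [fpoly] at h0
    simp [zero_pow hm.ne'] at h0

/-- injectivity of the product of factors on multisets of parts `≥ 3`. -/
lemma CPm_inj_three : ∀ (n : ℕ) (A B : Multiset ℕ), Multiset.card A = n →
    (∀ m ∈ A, 3 ≤ m) → (∀ m ∈ B, 3 ≤ m) → CPm A = CPm B → A = B := by
  intro n
  induction n with
  | zero =>
    intro A B hcard hA hB h
    have hB0 : Multiset.card B = 0 := by rw [← card_eq_of_CPm_eq hA hB h, hcard]
    rw [Multiset.card_eq_zero.1 hcard, Multiset.card_eq_zero.1 hB0]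
  | succ n ih =>
    intro A B hcard hA hB h
    have hcardB : Multiset.card B = n + 1 := by rw [← card_eq_of_CPm_eq hA hB h, hcard]
    have hAne : A ≠ 0 := by
      intro h0; rw [h0] at hcard; simp at hcard
    have hBne : B ≠ 0 := by
      intro h0; rw [h0] at hcardB; simp at hcardB
    obtain ⟨a0, ha0⟩ := Multiset.exists_mem_of_ne_zero hAne
    obtain ⟨b0, hb0⟩ := Multiset.exists_mem_of_ne_zero hBne
    have hAfin : A.toFinset.Nonempty := ⟨a0, Multiset.mem_toFinset.2 ha0⟩
    have hBfin : B.toFinset.Nonempty := ⟨b0, Multiset.mem_toFinset.2 hb0⟩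
    have hα₁A : A.toFinset.min' hAfin ∈ A := Multiset.mem_toFinset.1 (A.toFinset.min'_mem hAfin)
    have hβ₁B : B.toFinset.min' hBfin ∈ B := Multiset.mem_toFinset.1 (B.toFinset.min'_mem hBfin)
    set α := min (A.toFinset.min' hAfin) (B.toFinset.min' hBfin) with hαdef
    have hαA : ∀ m ∈ A, α ≤ m := fun m hm =>
      le_trans (min_le_left _ _) (A.toFinset.min'_le m (Multiset.mem_toFinset.2 hm))
    have hαB : ∀ m ∈ B, α ≤ m := fun m hm =>
      le_trans (min_le_right _ _) (B.toFinset.min'_le m (Multiset.mem_toFinset.2 hm))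
    have hα3 : 3 ≤ α := le_min (hA _ hα₁A) (hB _ hβ₁B)
    have hcnt : A.count α = B.count α := by
      have cA := coeff_CPm A α hα3 hαA α le_rfl
      have cB := coeff_CPm B α hα3 hαB α le_rfl
      rw [if_pos rfl] at cA cB
      rw [h, cB, hcard, ← hcardB] at cA
      have : (A.count α : ℤ) = B.count α := by linarith
      exact_mod_cast this
    have hαboth : α ∈ A ∧ α ∈ B := by
      rcases min_cases (A.toFinset.min' hAfin) (B.toFinset.min' hBfin) with ⟨hmin, -⟩ | ⟨hmin, -⟩
      · have hαA' : α ∈ A := by rw [hαdef, hmin]; exact hα₁A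
        have hp : 0 < B.count α := by
          rw [← hcnt]
          exact Multiset.count_pos.2 hαA'
        exact ⟨hαA', Multiset.count_pos.1 hp⟩
      · have hαB' : α ∈ B := by rw [hαdef, hmin]; exact hβ₁B
        have hp : 0 < A.count α := by
          rw [hcnt]
          exact Multiset.count_pos.2 hαB'
        exact ⟨Multiset.count_pos.1 hp, hαB'⟩
    obtain ⟨hαA', hαB'⟩ := hαboth
    have hprodA : fpoly α * ((A.erase α).map fpoly).prod = (A.map fpoly).prod :=
      Multiset.prod_map_erase (f := fpoly) hαA'
    have hprodB : fpoly α * ((B.erase α).map fpoly).prod = (B.map fpoly).prod :=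
      Multiset.prod_map_erase (f := fpoly) hαB'
    have herase : CPm (A.erase α) = CPm (B.erase α) := by
      apply mul_left_cancel₀ (fpoly_ne_zero α)
      show fpoly α * ((A.erase α).map fpoly).prod = fpoly α * ((B.erase α).map fpoly).prod
      rw [hprodA, hprodB]
      exact h
    have hcarderase : Multiset.card (A.erase α) = n := by
      rw [Multiset.card_erase_of_mem hαA', hcard]
      rfl
    have hfin := ih (A.erase α) (B.erase α) hcarderase
      (fun m hm => hA m (Multiset.mem_of_mem_erase hm))
      (fun m hm => hB m (Multiset.mem_of_mem_erase hm)) herase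
    calc A = α ::ₘ A.erase α := (Multiset.cons_erase hαA').symm
    _ = α ::ₘ B.erase α := by rw [hfin]
    _ = B := Multiset.cons_erase hαB'


lemma coeff_mul_one_poly (P Q : Polynomial ℤ) :
    (P * Q).coeff 1 = P.coeff 0 * Q.coeff 1 + P.coeff 1 * Q.coeff 0 := by
  rw [Polynomial.coeff_mul, Finset.Nat.sum_antidiagonal_eq_sum_range_succ_mk]
  rw [Finset.sum_range_succ, Finset.sum_range_succ, Finset.sum_range_zero]
  norm_num

lemma gpoly_one : gpoly 1 = 1 := by
  rw [gpoly]
  simp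

lemma gpoly_coeff_zero (m : ℕ) : (gpoly m).coeff 0 = 1 := by
  rw [gpoly, Polynomial.coeff_sub, Polynomial.coeff_one, Polynomial.finset_sum_coeff]
  rw [Finset.sum_eq_zero, if_pos rfl, sub_zero]
  intro j hj
  simp only [Finset.mem_Icc] at hj
  rw [Polynomial.coeff_X_pow, if_neg (by omega)]

lemma gpoly_coeff_one {m : ℕ} (hm : 3 ≤ m) : (gpoly m).coeff 1 = -1 := by
  rw [gpoly, Polynomial.coeff_sub, Polynomial.coeff_one, Polynomial.finset_sum_coeff]
  rw [if_neg (by omega), Finset.sum_eq_single 1]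
  · simp
  · intro j hj hne
    rw [Polynomial.coeff_X_pow, if_neg (by omega)]
  · intro hne
    simp only [Finset.mem_Icc] at hne
    omega

lemma Gm_coeff_zero (A : Multiset ℕ) : (Gm A).coeff 0 = 1 := by
  induction A using Multiset.induction with
  | empty => simp [Gm]
  | cons m A ih =>
    simp only [Gm, Multiset.map_cons, Multiset.prod_cons] at *
    rw [Polynomial.mul_coeff_zero, ih, mul_one, gpoly_coeff_zero]

lemma Gm_coeff_one (A : Multiset ℕ) (hA : ∀ m ∈ A, 3 ≤ m) :
    (Gm A).coeff 1 = -(Multiset.card A : ℤ) := by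
  induction A using Multiset.induction with
  | empty => simp [Gm, Polynomial.coeff_one]
  | cons m A ih =>
    have hm := hA m (Multiset.mem_cons_self m A)
    have ih' := ih fun x hx => hA x (Multiset.mem_cons_of_mem hx)
    simp only [Gm, Multiset.map_cons, Multiset.prod_cons] at *
    rw [coeff_mul_one_poly, gpoly_coeff_zero, gpoly_coeff_one hm, ih',
      show (Multiset.map gpoly A).prod.coeff 0 = 1 from Gm_coeff_zero A, Multiset.card_cons]
    push_cast
    ring

/-- full injectivity: multisets of parts that are positive and not `2`. -/
lemma CPm_inj (A B : Multiset ℕ) (hApos : ∀ m ∈ A, 0 < m) (hA2 : ∀ m ∈ A, m ≠ 2)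
    (hBpos : ∀ m ∈ B, 0 < m) (hB2 : ∀ m ∈ B, m ≠ 2) (h : CPm A = CPm B) : A = B := by
  classical
  rw [CPm_eq A hApos, CPm_eq B hBpos] at h
  obtain ⟨hcard, hG⟩ := strip_one_sub_X _ _ _ _ (Gm_eval_one_ne_zero A hA2)
    (Gm_eval_one_ne_zero B hB2) h
  -- split off the parts equal to 1
  have key3 : ∀ m ∈ A, m = 1 ∨ 3 ≤ m := by
    intro m hm
    have := hApos m hm
    have := hA2 m hm
    omega
  have key3B : ∀ m ∈ B, m = 1 ∨ 3 ≤ m := by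
    intro m hm
    have := hBpos m hm
    have := hB2 m hm
    omega
  have hsplit : ∀ C : Multiset ℕ, C.filter (· = 1) + C.filter (¬ · = 1) = C :=
    fun C => Multiset.filter_add_not _ C
  have hGsplit : ∀ C : Multiset ℕ, Gm C = Gm (C.filter (¬ · = 1)) := by
    intro C
    conv_lhs => rw [← hsplit C]
    rw [Gm, Multiset.map_add, Multiset.prod_add]
    have h1 : Gm (C.filter (· = 1)) = 1 := by
      rw [Gm, Multiset.filter_eq', Multiset.map_replicate, gpoly_one,
        Multiset.prod_replicate, one_pow]
    rw [show (Multiset.map gpoly (C.filter (· = 1))).prod = Gm (C.filter (· = 1)) from rfl, h1,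
      one_mul]
    rfl
  have hA3 : ∀ m ∈ A.filter (¬ · = 1), 3 ≤ m := by
    intro m hm
    rw [Multiset.mem_filter] at hm
    rcases key3 m hm.1 with h1 | h3
    · exact absurd h1 hm.2
    · exact h3
  have hB3 : ∀ m ∈ B.filter (¬ · = 1), 3 ≤ m := by
    intro m hm
    rw [Multiset.mem_filter] at hm
    rcases key3B m hm.1 with h1 | h3
    · exact absurd h1 hm.2
    · exact h3
  have hG' : Gm (A.filter (¬ · = 1)) = Gm (B.filter (¬ · = 1)) := by
    rw [← hGsplit A, ← hGsplit B, hG]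
  have hcard' : Multiset.card (A.filter (¬ · = 1)) = Multiset.card (B.filter (¬ · = 1)) := by
    have c1 := Gm_coeff_one _ hA3
    have c2 := Gm_coeff_one _ hB3
    rw [hG', c2] at c1
    have : (Multiset.card (B.filter (¬ · = 1)) : ℤ)
        = Multiset.card (A.filter (¬ · = 1)) := by linarith
    exact_mod_cast this.symm
  have hCPm' : CPm (A.filter (¬ · = 1)) = CPm (B.filter (¬ · = 1)) := by
    rw [CPm_eq _ (fun m hm => by have := hA3 m hm; omega),
      CPm_eq _ (fun m hm => by have := hB3 m hm; omega), hG', hcard']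
  have hfilter_eq : A.filter (¬ · = 1) = B.filter (¬ · = 1) :=
    CPm_inj_three _ _ _ rfl hA3 hB3 hCPm'
  -- the count of ones agrees
  have hcards : Multiset.card A = Multiset.card B := hcard
  have hones : A.filter (· = 1) = B.filter (· = 1) := by
    have c1 : Multiset.card (A.filter (· = 1)) = Multiset.card (B.filter (· = 1)) := by
      have hA' := congrArg Multiset.card (hsplit A)
      have hB' := congrArg Multiset.card (hsplit B)
      rw [Multiset.card_add] at hA' hB'
      omega
    rw [Multiset.filter_eq', Multiset.filter_eq'] at c1 ⊢
    rw [Multiset.card_replicate, Multiset.card_replicate] at c1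
    rw [c1]
  calc A = A.filter (· = 1) + A.filter (¬ · = 1) := (hsplit A).symm
  _ = B.filter (· = 1) + B.filter (¬ · = 1) := by rw [hones, hfilter_eq]
  _ = B := hsplit B


end Poly


section Bridge

lemma coe_fpoly (m : ℕ) : Polynomial.coeToPowerSeries.ringHom (fpoly m) = fps m := by
  rw [fpoly, fps, map_add, map_sub, map_mul, map_pow, map_one, map_ofNat,
    Polynomial.coeToPowerSeries.ringHom_apply, Polynomial.coe_X]

lemma coe_CPm (a : List ℕ) : Polynomial.coeToPowerSeries.ringHom (CPm ↑a) = Cs a := by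
  induction a with
  | nil =>
    rw [show ((↑([] : List ℕ)) : Multiset ℕ) = 0 from rfl]
    simp [CPm, Cs]
  | cons h t ih =>
    rw [show ((↑(h :: t) : Multiset ℕ)) = h ::ₘ ↑t from rfl, CPm, Multiset.map_cons,
      Multiset.prod_cons, map_mul, coe_fpoly,
      show (Multiset.map fpoly ↑t).prod = CPm ↑t from rfl, ih,
      show Cs (h :: t) = fps h * Cs t from by rw [Cs, List.map_cons, List.prod_cons]; rfl]

lemma Cs_eq_iff_CPm (a b : List ℕ) : Cs a = Cs b ↔ CPm ↑a = CPm ↑b := by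
  constructor
  · intro h
    have h2 : Polynomial.coeToPowerSeries.ringHom (CPm ↑a)
        = Polynomial.coeToPowerSeries.ringHom (CPm ↑b) := by rw [coe_CPm, coe_CPm, h]
    rw [Polynomial.coeToPowerSeries.ringHom_apply, Polynomial.coeToPowerSeries.ringHom_apply] at h2
    exact (Polynomial.coe_inj).1 h2
  · intro h
    rw [← coe_CPm, ← coe_CPm, h]

end Bridge

section NormM

/-- normalisation replacing each part `2` by two parts `1`. -/
def normM (A : Multiset ℕ) : Multiset ℕ := A.bind fun m => if m = 2 then {1, 1} else {m}

lemma mem_normM {A : Multiset ℕ} {x : ℕ} (hx : x ∈ normM A) :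
    ∃ m ∈ A, (m = 2 ∧ x = 1) ∨ (m ≠ 2 ∧ x = m) := by
  rw [normM, Multiset.mem_bind] at hx
  obtain ⟨m, hm, hxm⟩ := hx
  refine ⟨m, hm, ?_⟩
  by_cases h2 : m = 2
  · rw [if_pos h2] at hxm
    left
    refine ⟨h2, ?_⟩
    simpa using hxm
  · rw [if_neg h2] at hxm
    right
    exact ⟨h2, by simpa using hxm⟩

lemma normM_pos {A : Multiset ℕ} (hA : ∀ m ∈ A, 0 < m) {x : ℕ} (hx : x ∈ normM A) : 0 < x := by
  obtain ⟨m, hm, hcase⟩ := mem_normM hx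
  rcases hcase with ⟨-, rfl⟩ | ⟨-, rfl⟩
  · omega
  · exact hA _ hm

lemma normM_ne_two {A : Multiset ℕ} {x : ℕ} (hx : x ∈ normM A) : x ≠ 2 := by
  obtain ⟨m, hm, hcase⟩ := mem_normM hx
  rcases hcase with ⟨-, rfl⟩ | ⟨hne, rfl⟩
  · omega
  · exact hne

lemma normM_sum (A : Multiset ℕ) : (normM A).sum = A.sum := by
  rw [normM, Multiset.sum_bind]
  have h1 : ∀ m ∈ A, ((if m = 2 then ({1, 1} : Multiset ℕ) else {m})).sum = m := by
    intro m hm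
    by_cases h2 : m = 2
    · rw [if_pos h2, h2]
      rfl
    · rw [if_neg h2]
      simp
  rw [Multiset.map_congr rfl h1, Multiset.map_id']

lemma CPm_normM (A : Multiset ℕ) : CPm (normM A) = CPm A := by
  rw [CPm, normM, Multiset.map_bind, Multiset.prod_bind, CPm]
  congr 1
  apply Multiset.map_congr rfl
  intro m hm
  by_cases h2 : m = 2
  · rw [if_pos h2, h2]
    show fpoly 1 * (fpoly 1 * 1) = fpoly 2
    rw [fpoly, fpoly]
    ring
  · rw [if_neg h2]
    simp

lemma normM_of_ne_two (A : Multiset ℕ) (hA : ∀ m ∈ A, m ≠ 2) : normM A = A := by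
  induction A using Multiset.induction with
  | empty => rfl
  | cons m A ih =>
    rw [normM, Multiset.cons_bind, if_neg (hA m (Multiset.mem_cons_self m A)),
      show (A.bind fun m => if m = 2 then ({1,1} : Multiset ℕ) else {m}) = normM A from rfl,
      ih fun x hx => hA x (Multiset.mem_cons_of_mem hx)]
    rw [Multiset.singleton_add]

end NormM

section Main

variable {k : ℕ}

lemma comp_ne_nil (hk : 0 < k) (a : {l : List ℕ // IsComposition k l}) : a.1 ≠ [] := by
  intro hnil
  have := a.2.2
  rw [hnil] at this
  simp at this
  omega

lemma d_eq_of_rel (hk : 0 < k) (a b : {l : List ℕ // IsComposition k l})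
    (hrel : ∀ N : ℕ, 0 < N → (domSet N a.1).ncard = (domSet N b.1).ncard) :
    ∀ N, d N a.1 = d N b.1 := by
  intro N
  rcases Nat.eq_zero_or_pos N with rfl | hN
  · obtain ⟨ha, t, hat⟩ : ∃ h t, a.1 = h :: t := by
      cases hA : a.1 with
      | nil => exact absurd hA (comp_ne_nil hk a)
      | cons x xs => exact ⟨x, xs, rfl⟩
    obtain ⟨hb, u, hbu⟩ : ∃ h t, b.1 = h :: t := by
      cases hB : b.1 with
      | nil => exact absurd hB (comp_ne_nil hk b)
      | cons x xs => exact ⟨x, xs, rfl⟩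
    rw [hat, hbu, d_zero_cons, d_zero_cons]
  · exact hrel N hN

lemma normM_eq_of_rel (hk : 0 < k) (a b : {l : List ℕ // IsComposition k l})
    (hrel : ∀ N : ℕ, 0 < N → (domSet N a.1).ncard = (domSet N b.1).ncard) :
    normM ↑a.1 = normM ↑b.1 := by
  have hd := d_eq_of_rel hk a b hrel
  have hD : Dser a.1 = Dser b.1 := by
    ext N
    rw [Dser, Dser, PowerSeries.coeff_mk, PowerSeries.coeff_mk, hd N]
  have hCs := Cs_eq_of_Dser_eq a.2 b.2 hD
  have hCP : CPm ↑a.1 = CPm ↑b.1 := (Cs_eq_iff_CPm _ _).1 hCs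
  have hCPn : CPm (normM ↑a.1) = CPm (normM ↑b.1) := by
    rw [CPm_normM, CPm_normM, hCP]
  exact CPm_inj _ _ (fun m hm => normM_pos (fun x hx => a.2.1 x hx) hm)
    (fun m hm => normM_ne_two hm)
    (fun m hm => normM_pos (fun x hx => b.2.1 x hx) hm)
    (fun m hm => normM_ne_two hm) hCPn

lemma rel_of_normM_eq (a b : {l : List ℕ // IsComposition k l})
    (h : normM ↑a.1 = normM ↑b.1) :
    ∀ N : ℕ, 0 < N → (domSet N a.1).ncard = (domSet N b.1).ncard := by
  have hCP : CPm ↑a.1 = CPm ↑b.1 := by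
    rw [← CPm_normM (↑a.1), h, CPm_normM]
  have hCs : Cs a.1 = Cs b.1 := (Cs_eq_iff_CPm _ _).2 hCP
  have hD := Dser_eq_of_Cs_eq a.2 b.2 hCs
  intro N hN
  have := congrArg (PowerSeries.coeff N) hD
  rw [Dser, Dser, PowerSeries.coeff_mk, PowerSeries.coeff_mk] at this
  exact_mod_cast this

end Main


section Count

lemma card_no_two (k : ℕ) :
    Fintype.card {P : Nat.Partition k // 2 ∉ P.parts}
      = Fintype.card (Nat.Partition k) -
        (if 2 ≤ k then Fintype.card (Nat.Partition (k - 2)) else 0) := by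
  classical
  by_cases hk2 : 2 ≤ k
  · rw [if_pos hk2]
    have e : {P : Nat.Partition k // 2 ∈ P.parts} ≃ Nat.Partition (k - 2) :=
      { toFun := fun P => ⟨P.1.parts.erase 2,
          fun hi => P.1.parts_pos (Multiset.mem_of_mem_erase hi),
          by
            have hc := Multiset.cons_erase P.2
            have hsum := P.1.parts_sum
            have h2 : (2 ::ₘ P.1.parts.erase 2).sum = k := by rw [hc]; exact hsum
            rw [Multiset.sum_cons] at h2
            omega⟩
        invFun := fun Q => ⟨⟨2 ::ₘ Q.parts,
          fun hi => by
            rcases Multiset.mem_cons.1 hi with rfl | h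
            · omega
            · exact Q.parts_pos h,
          by rw [Multiset.sum_cons, Q.parts_sum]; omega⟩, Multiset.mem_cons_self 2 _⟩
        left_inv := fun P => Subtype.ext (Nat.Partition.ext (Multiset.cons_erase P.2))
        right_inv := fun Q => Nat.Partition.ext (Multiset.erase_cons_head 2 Q.parts) }
    rw [← Fintype.card_congr e, Fintype.card_subtype_compl]
  · rw [if_neg hk2, Nat.sub_zero]
    have hall : ∀ P : Nat.Partition k, 2 ∉ P.parts := by
      intro P h2
      have hle : 2 ≤ P.parts.sum :=
        Multiset.single_le_sum (fun x _ => Nat.zero_le x) 2 h2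
      rw [P.parts_sum] at hle
      omega
    exact Fintype.card_congr (Equiv.subtypeUnivEquiv hall)

end Count

end DomProof

theorem card_domEquiv_classes (k : ℕ) (hk : 0 < k) :
    Nat.card (Quot fun a b : {l : List ℕ // IsComposition k l} =>
        ∀ N : ℕ, 0 < N → (domSet N a.1).ncard = (domSet N b.1).ncard) =
      Fintype.card (Nat.Partition k) -
        (if 2 ≤ k then Fintype.card (Nat.Partition (k - 2)) else 0) := by
  classical
  have key_iff : ∀ a b : {l : List ℕ // IsComposition k l},
      (∀ N : ℕ, 0 < N → (domSet N a.1).ncard = (domSet N b.1).ncard) ↔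
        DomProof.normM ↑a.1 = DomProof.normM ↑b.1 :=
    fun a b => ⟨DomProof.normM_eq_of_rel hk a b, DomProof.rel_of_normM_eq a b⟩
  let φ : {l : List ℕ // IsComposition k l} → {P : Nat.Partition k // 2 ∉ P.parts} := fun a =>
    ⟨⟨DomProof.normM ↑a.1,
      fun hi => DomProof.normM_pos (fun x hx => a.2.1 x hx) hi,
      by rw [DomProof.normM_sum]; exact (Multiset.sum_coe _).trans a.2.2⟩,
      fun h2 => DomProof.normM_ne_two (show (2:ℕ) ∈ DomProof.normM ↑a.1 from h2) rfl⟩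
  have e : (Quot fun a b : {l : List ℕ // IsComposition k l} =>
        ∀ N : ℕ, 0 < N → (domSet N a.1).ncard = (domSet N b.1).ncard)
      ≃ {P : Nat.Partition k // 2 ∉ P.parts} :=
    { toFun := Quot.lift φ fun a b hab =>
        Subtype.ext (Nat.Partition.ext ((key_iff a b).1 hab))
      invFun := fun P => Quot.mk _ ⟨P.1.parts.toList,
        fun x hx => P.1.parts_pos (by rwa [← Multiset.mem_toList]),
        by rw [show (P.1.parts.toList.sum) = P.1.parts.sum from Multiset.prod_toList (M := Multiplicative ℕ) P.1.parts]; exact P.1.parts_sum⟩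
      left_inv := by
        apply Quot.ind
        intro a
        apply Quot.sound
        apply (key_iff _ a).2
        show DomProof.normM ↑(φ a).1.parts.toList = DomProof.normM ↑a.1
        rw [Multiset.coe_toList]
        show DomProof.normM (DomProof.normM ↑a.1) = DomProof.normM ↑a.1
        exact DomProof.normM_of_ne_two _ fun m hm => DomProof.normM_ne_two hm
      right_inv := by
        intro P
        apply Subtype.ext
        apply Nat.Partition.ext
        show DomProof.normM ↑(P.1.parts.toList) = P.1.parts
        rw [Multiset.coe_toList]
        exact DomProof.normM_of_ne_two _ fun m hm h2 => P.2 (h2 ▸ hm) }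
  rw [Nat.card_congr e, Nat.card_eq_fintype_card, DomProof.card_no_two]
end

section
/- For every n ≥ 1, the number of set partitions of [n] avoiding the pattern 121 (in the restricted growth function sense) equals 2^{n−1}, the number of compositions of n; explicitly, the map sending a composition (a_1,...,a_m) of n to the RGF word 1^{a_1} 2^{a_2} ... m^{a_m} is a bijection onto 121-avoiding partitions. -/
/-- The word `1^{a_1} 2^{a_2} ⋯ m^{a_m}` associated to the composition `a = (a_1, …, a_m)`. -/
def rgfWord (a : List ℕ) : List ℕ :=
  a.zipIdx.flatMap fun p => List.replicate p.1 (p.2 + 1)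

/-- `w` is a restricted growth function: `w i ≥ 1` and each entry exceeds the
maximum of the previous entries by at most one (so the first entry is `1`). -/
def IsRGF (w : List ℕ) : Prop :=
  ∀ i < w.length, 1 ≤ w[i]! ∧ w[i]! ≤ ((w.take i).foldr max 0) + 1

/-- `w` contains the pattern `p`: some subsequence of `w` is order- and
equality-isomorphic to `p`. -/
def ContainsPat (w p : List ℕ) : Prop :=
  ∃ w' : List ℕ, w'.Sublist w ∧ w'.length = p.length ∧
    ∀ i < p.length, ∀ j < p.length,
      (w'[i]! = w'[j]! ↔ p[i]! = p[j]!) ∧ (w'[i]! < w'[j]! ↔ p[i]! < p[j]!)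

namespace RGF121

lemma enumFrom_shift (a : List ℕ) (k : ℕ) :
    ((List.zipIdx a (k+1)).flatMap fun p => List.replicate p.1 (p.2 + 1)) =
      ((List.zipIdx a k).flatMap fun p => List.replicate p.1 (p.2 + 1)).map (· + 1) := by
  induction a generalizing k with
  | nil => simp
  | cons x l ih =>
    simp only [List.zipIdx_cons, List.flatMap_cons, List.map_append, ih (k+1)]
    congr 1
    simp [List.map_replicate]

lemma rgfWord_cons (k : ℕ) (l : List ℕ) :
    rgfWord (k :: l) = List.replicate k 1 ++ (rgfWord l).map (· + 1) := by
  show ((List.zipIdx (k :: l) 0).flatMap fun p => List.replicate p.1 (p.2 + 1)) = _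
  rw [List.zipIdx_cons]
  simp only [List.flatMap_cons]
  congr 1
  exact enumFrom_shift l 0

lemma rgfWord_nil : rgfWord [] = [] := rfl

lemma rgfWord_length (a : List ℕ) : (rgfWord a).length = a.sum := by
  induction a with
  | nil => rfl
  | cons k l ih => rw [rgfWord_cons]; simp [ih]

lemma rgfWord_pos (a : List ℕ) : ∀ x ∈ rgfWord a, 1 ≤ x := by
  induction a with
  | nil => simp [rgfWord_nil]
  | cons k l ih =>
    rw [rgfWord_cons]
    intro x hx
    rcases List.mem_append.1 hx with h | h
    · have := List.eq_of_mem_replicate h; omega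
    · rcases List.mem_map.1 h with ⟨y, _, rfl⟩; omega

lemma rgfWord_head (a : List ℕ) (ha : ∀ x ∈ a, 0 < x) :
    ∀ z ∈ (rgfWord a).head?, z = 1 := by
  cases a with
  | nil => simp [rgfWord_nil]
  | cons k l =>
    rw [rgfWord_cons]
    intro z hz
    have hk : 0 < k := ha k (by simp)
    rw [List.head?_append] at hz
    cases k with
    | zero => omega
    | succ m =>
      simp [List.replicate_succ] at hz
      omega

lemma rgfWord_chain (a : List ℕ) (ha : ∀ x ∈ a, 0 < x) :
    List.Chain' (fun x y => x ≤ y ∧ y ≤ x + 1) (rgfWord a) := by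
  induction a with
  | nil => simp [rgfWord_nil, List.Chain']
  | cons k l ih =>
    rw [rgfWord_cons]
    rw [List.Chain', List.isChain_append]
    refine ⟨List.isChain_replicate_of_rel _ ⟨le_refl _, by omega⟩, ?_, ?_⟩
    · rw [List.isChain_map]
      exact (ih (fun x hx => ha x (by simp [hx]))).imp (fun a b h => by omega)
    · intro x hx y hy
      have hx1 : x = 1 := by
        rw [List.getLast?_replicate] at hx
        have hk : 0 < k := ha k (by simp)
        simp only [if_neg (by omega : ¬ k = 0)] at hx
        exact (Option.some_inj.1 hx).symm
      rw [List.head?_map] at hy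
      rcases Option.map_eq_some_iff.1 (by exact hy ▸ rfl : (rgfWord l).head?.map (· + 1) = some y) with ⟨z, hz, rfl⟩
      have := rgfWord_head l (fun x hx => ha x (by simp [hx])) z hz
      omega

end RGF121

namespace RGF121

lemma fold_le {l : List ℕ} {m : ℕ} (h : ∀ x ∈ l, x ≤ m) : l.foldr max 0 ≤ m := by
  induction l with
  | nil => simp
  | cons a t ih =>
    simp only [List.foldr_cons]
    exact max_le (h a (by simp)) (ih fun x hx => h x (by simp [hx]))

lemma le_fold {l : List ℕ} {x : ℕ} (h : x ∈ l) : x ≤ l.foldr max 0 := by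
  induction l with
  | nil => simp at h
  | cons a t ih =>
    simp only [List.foldr_cons]
    rcases List.mem_cons.1 h with rfl | h
    · exact le_max_left _ _
    · exact le_trans (ih h) (le_max_right _ _)

lemma fold_mem {l : List ℕ} (h : 0 < l.foldr max 0) : l.foldr max 0 ∈ l := by
  induction l with
  | nil => simp at h
  | cons a t ih =>
    simp only [List.foldr_cons] at h ⊢
    rcases le_total a (t.foldr max 0) with hle | hle
    · rw [max_eq_right hle] at h ⊢
      exact List.mem_cons_of_mem _ (ih (by omega))
    · rw [max_eq_left hle]
      exact List.mem_cons_self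

-- chain to index facts
lemma chain_step {w : List ℕ} {R : ℕ → ℕ → Prop} (h : List.Chain' R w) {i : ℕ}
    (hi : i + 1 < w.length) : R w[i]! w[i+1]! := by
  have := List.isChain_iff_getElem.1 h i (by omega)
  rwa [getElem!_pos w i (by omega), getElem!_pos w (i+1) (by omega)]

lemma chain_mono {w : List ℕ} (h : List.Chain' (fun x y : ℕ => x ≤ y ∧ y ≤ x + 1) w)
    {i j : ℕ} (hj : j < w.length) (hij : i ≤ j) : w[i]! ≤ w[j]! := by
  have hp : List.Pairwise (· ≤ ·) w := by
    rw [← List.isChain_iff_pairwise]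
    exact h.imp fun a b hab => hab.1
  rcases eq_or_lt_of_le hij with rfl | hlt
  · exact le_refl _
  · have := List.pairwise_iff_getElem.1 hp i j (by omega) hj hlt
    rwa [getElem!_pos w i (by omega), getElem!_pos w j hj]

lemma pm_eq {w : List ℕ} (h : List.Chain' (fun x y : ℕ => x ≤ y ∧ y ≤ x + 1) w)
    {i : ℕ} (hi : i ≤ w.length) (hpos : 0 < i) :
    (w.take i).foldr max 0 = w[i-1]! := by
  apply le_antisymm
  · apply fold_le
    intro x hx
    rcases List.mem_iff_getElem.1 hx with ⟨j, hj, rfl⟩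
    have hjlen : j < w.length := by
      have := hj; rw [List.length_take] at this; omega
    have hji : j < i := by
      have := hj; rw [List.length_take] at this; omega
    rw [List.getElem_take]
    rw [← getElem!_pos w j hjlen]
    exact chain_mono h (by omega) (by omega)
  · apply le_fold
    have h1 : i - 1 < (w.take i).length := by rw [List.length_take]; omega
    have : (w.take i)[i-1] = w[i-1] := List.getElem_take
    rw [getElem!_pos w (i-1) (by omega), ← this]
    exact List.getElem_mem _

lemma head?_one_iff {w : List ℕ} (hne : w ≠ []) (h : ∀ z ∈ w.head?, z = 1) : w[0]! = 1 := by
  have hlen : 0 < w.length := List.length_pos_iff.2 hne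
  have := h (w.head hne) (by rw [List.head?_eq_head hne]; exact Option.mem_some_self _)
  rw [getElem!_pos w 0 hlen]
  rwa [← List.head_eq_getElem]

lemma isRGF_of {w : List ℕ} (hh : ∀ z ∈ w.head?, z = 1)
    (hc : List.Chain' (fun x y : ℕ => x ≤ y ∧ y ≤ x + 1) w) : IsRGF w := by
  intro i hi
  have hne : w ≠ [] := by intro h; rw [h] at hi; simp at hi
  have h0 : w[0]! = 1 := head?_one_iff hne hh
  constructor
  · calc 1 = w[0]! := h0.symm
      _ ≤ w[i]! := chain_mono hc hi (by omega)
  · cases i with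
    | zero => simp [h0]
    | succ k =>
      rw [pm_eq hc (by omega) (by omega)]
      have := chain_step hc hi
      simp only [Nat.add_sub_cancel]
      omega

end RGF121

namespace RGF121

lemma pat_len : ([1,2,1] : List ℕ).length = 3 := rfl

lemma not_contains_of_chain {w : List ℕ}
    (hc : List.Chain' (fun x y : ℕ => x ≤ y ∧ y ≤ x + 1) w) :
    ¬ ContainsPat w [1, 2, 1] := by
  rintro ⟨w', hsub, hlen, hcond⟩
  rw [pat_len] at hlen
  have hp : List.Pairwise (· ≤ ·) w := by
    rw [← List.isChain_iff_pairwise]; exact hc.imp fun a b hab => hab.1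
  have hp' : List.Pairwise (· ≤ ·) w' := hp.sublist hsub
  have h01 : w'[0]! < w'[1]! :=
    (hcond 0 (by norm_num) 1 (by norm_num)).2.mpr (by norm_num)
  have h12 : w'[1]! ≤ w'[2]! := by
    have := List.pairwise_iff_getElem.1 hp' 1 2 (by omega) (by omega) (by omega)
    rwa [getElem!_pos w' 1 (by omega), getElem!_pos w' 2 (by omega)]
  have h02 : w'[0]! = w'[2]! :=
    (hcond 0 (by norm_num) 2 (by norm_num)).1.mpr rfl
  omega

lemma contains_of_descent {w : List ℕ} {j i : ℕ} (hji : j < i) (hi : i + 1 < w.length)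
    (hji' : w[j]! = w[i+1]!) (hdesc : w[i+1]! < w[i]!) : ContainsPat w [1, 2, 1] := by
  have hjlen : j < w.length := by omega
  have hilen : i < w.length := by omega
  set c := w[i+1]! with hcdef
  set b := w[i]! with hbdef
  refine ⟨[c, b, c], ?_, rfl, ?_⟩
  · have hsub : List.Sublist [w[j], w[i], w[i+1]] w := by
      simpa using List.map_getElem_sublist (l := w)
        (is := [⟨j, hjlen⟩, ⟨i, hilen⟩, ⟨i+1, hi⟩]) (by simp; omega)
    have e1 : w[j] = c := by rw [← getElem!_pos w j hjlen, hji']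
    have e2 : w[i] = b := (getElem!_pos w i hilen).symm
    have e3 : w[i+1] = c := (getElem!_pos w (i+1) hi).symm
    rwa [e1, e2, e3] at hsub
  · intro a ha b' hb'
    rw [pat_len] at ha hb'
    interval_cases a <;> interval_cases b' <;>
      simp only [show ([1,2,1]:List ℕ)[0]! = 1 from rfl, show ([1,2,1]:List ℕ)[1]! = 2 from rfl,
        show ([1,2,1]:List ℕ)[2]! = 1 from rfl,
        show ([c,b,c]:List ℕ)[0]! = c from rfl, show ([c,b,c]:List ℕ)[1]! = b from rfl,
        show ([c,b,c]:List ℕ)[2]! = c from rfl] <;>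
      constructor <;> constructor <;> omega

end RGF121

namespace RGF121

lemma occ {w : List ℕ} (hr : IsRGF w) :
    ∀ i, i ≤ w.length → ∀ c, 1 ≤ c → c ≤ (w.take i).foldr max 0 → ∃ j < i, w[j]! = c := by
  intro i
  induction i using Nat.strong_induction_on with
  | _ i ih =>
    intro hi c hc1 hcm
    have hpos : 0 < (w.take i).foldr max 0 := by omega
    have hmem := fold_mem hpos
    rcases List.mem_iff_getElem.1 hmem with ⟨j, hj, hje⟩
    rw [List.length_take] at hj
    have hjw : j < w.length := by omega
    have hji : j < i := by omega
    rw [List.getElem_take] at hje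
    rw [← getElem!_pos w j hjw] at hje
    by_cases heq : c = (w.take i).foldr max 0
    · exact ⟨j, hji, by omega⟩
    · have hlt : c < w[j]! := by omega
      have hj2 := (hr j hjw).2
      have : c ≤ (w.take j).foldr max 0 := by omega
      rcases ih j hji (by omega) c hc1 this with ⟨j', hj', he'⟩
      exact ⟨j', by omega, he'⟩

lemma chain_of_rgf_avoid {w : List ℕ} (hr : IsRGF w) (hnc : ¬ ContainsPat w [1, 2, 1]) :
    List.Chain' (fun x y : ℕ => x ≤ y ∧ y ≤ x + 1) w := by
  -- first: monotone
  have hmono : List.Chain' (· ≤ ·) w := by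
    by_contra hno
    rw [List.Chain', List.isChain_iff_getElem] at hno
    push_neg at hno
    rcases hno with ⟨i, hi, hlt⟩
    have hi1 : i + 1 < w.length := by omega
    rw [← getElem!_pos w i (by omega), ← getElem!_pos w (i+1) hi1] at hlt
    have hdesc : w[i+1]! < w[i]! := by omega
    -- w[i]! is in take (i+1), so pm(i+1) ≥ w[i]!
    have hpm : w[i]! ≤ (w.take (i+1)).foldr max 0 := by
      apply le_fold
      have h1 : i < (w.take (i+1)).length := by rw [List.length_take]; omega
      have e : (w.take (i+1))[i] = w[i] := List.getElem_take
      rw [getElem!_pos w i (by omega), ← e]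
      exact List.getElem_mem _
    have hc1 : 1 ≤ w[i+1]! := (hr (i+1) hi1).1
    rcases occ hr (i+1) (by omega) (w[i+1]!) hc1 (by omega) with ⟨j, hj, hje⟩
    have hji : j < i := by
      rcases Nat.lt_succ_iff_lt_or_eq.1 hj with h | rfl
      · exact h
      · omega
    exact hnc (contains_of_descent hji hi1 hje hdesc)
  -- now the step bound
  rw [List.Chain', List.isChain_iff_getElem]
  intro i hi
  rw [← getElem!_pos w i (by omega), ← getElem!_pos w (i+1) (by omega)]
  have hmono' : ∀ {a b : ℕ}, a ≤ b → b < w.length → w[a]! ≤ w[b]! := by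
    intro a b hab hb
    have hp : List.Pairwise (· ≤ ·) w := List.isChain_iff_pairwise.1 hmono
    rcases eq_or_lt_of_le hab with rfl | hlt
    · exact le_refl _
    · have := List.pairwise_iff_getElem.1 hp a b (by omega) hb hlt
      rwa [getElem!_pos w a (by omega), getElem!_pos w b hb]
  refine ⟨hmono' (by omega) (by omega), ?_⟩
  have h2 := (hr (i+1) (by omega)).2
  -- pm w (i+1) ≤ w[i]!
  have hpm : (w.take (i+1)).foldr max 0 ≤ w[i]! := by
    apply fold_le
    intro x hx
    rcases List.mem_iff_getElem.1 hx with ⟨j, hj, rfl⟩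
    rw [List.length_take] at hj
    rw [List.getElem_take, ← getElem!_pos w j (by omega)]
    exact hmono' (by omega) (by omega)
  omega

end RGF121

namespace RGF121


lemma recon : ∀ m : ℕ, ∀ w : List ℕ, w.length ≤ m →
    (∀ z ∈ w.head?, z = 1) →
    List.Chain' (fun x y : ℕ => x ≤ y ∧ y ≤ x + 1) w →
    (∀ x ∈ w, 1 ≤ x) →
    ∃ a : List ℕ, (∀ x ∈ a, 0 < x) ∧ rgfWord a = w := by
  intro m
  induction m with
  | zero =>
    intro w hw _ _ _
    have : w = [] := List.eq_nil_of_length_eq_zero (by omega)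
    exact ⟨[], by simp, by rw [this]; rfl⟩
  | succ m ih =>
    intro w hw hh hc hpos
    rcases w with _ | ⟨h, t⟩
    · exact ⟨[], by simp, rfl⟩
    set w := h :: t with hwdef
    have hne : w ≠ [] := by simp [hwdef]
    have hh1 : h = 1 := hh h (by simp [hwdef])
    set u := w.takeWhile (fun x => x == 1) with hu
    set v := w.dropWhile (fun x => x == 1) with hv
    have huv : u ++ v = w := List.takeWhile_append_dropWhile
    set k := u.length with hk
    have hurep : u = List.replicate k 1 := by
      rw [List.eq_replicate_iff]
      exact ⟨rfl, fun b hb => by simpa using List.mem_takeWhile_imp hb⟩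
    have hkpos : 0 < k := by
      rw [hk, hu, hwdef, hh1, List.takeWhile_cons]
      simp
    have hulen : u.length + v.length = w.length := by
      rw [← huv]; simp
    rcases hvcase : v with _ | ⟨y, t'⟩
    · -- w = replicate k 1
      refine ⟨[k], by simpa using hkpos, ?_⟩
      rw [rgfWord_cons]
      simp only [rgfWord, List.zipIdx_nil, List.flatMap_nil, List.map_nil, List.append_nil]
      rw [← huv, hvcase, hurep, List.append_nil]
    · -- v = y :: t'
      have hcsplit := (List.isChain_append.1 (huv ▸ hc))
      obtain ⟨cu, cv, hjun⟩ := hcsplit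
      have hlast : u.getLast? = some 1 := by
        rw [hurep, List.getLast?_replicate, if_neg (by omega)]
      have hy2 : y ≤ 2 := by
        have := hjun 1 (by rw [hlast]; exact Option.mem_some_self _) y
          (by rw [hvcase]; exact Option.mem_some_self _)
        omega
      have hyne1 : y ≠ 1 := by
        have := List.head?_dropWhile_not (fun x => x == 1) w
        rw [← hv, hvcase] at this
        simpa using this
      have hy1 : 1 ≤ y := hpos y (by
        have : y ∈ v := by rw [hvcase]; simp
        exact (List.dropWhile_suffix _).subset this)
      have hyeq : y = 2 := by omega
      -- all entries of v are ≥ 2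
      have hvge : ∀ x ∈ v, 2 ≤ x := by
        intro x hx
        rw [hvcase] at hx cv
        rcases List.mem_cons.1 hx with rfl | hx
        · omega
        · have hp : List.Pairwise (· ≤ ·) (y :: t') := by
            rw [← List.isChain_iff_pairwise]
            exact cv.imp fun a b hab => hab.1
          have := (List.pairwise_cons.1 hp).1 x hx
          omega
      set v' := v.map (· - 1) with hv'
      have hv'head : ∀ z ∈ v'.head?, z = 1 := by
        intro z hz
        rw [hv', hvcase] at hz
        simp only [List.map_cons, List.head?_cons, Option.mem_some_iff] at hz
        omega
      have hv'chain : List.Chain' (fun x y : ℕ => x ≤ y ∧ y ≤ x + 1) v' := by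
        rw [hv', List.Chain', List.isChain_map]
        exact cv.imp fun a b hab => by omega
      have hv'pos : ∀ x ∈ v', 1 ≤ x := by
        intro x hx
        rw [hv'] at hx
        rcases List.mem_map.1 hx with ⟨z, hz, rfl⟩
        have := hvge z hz
        omega
      have hv'len : v'.length ≤ m := by
        rw [hv', List.length_map]
        omega
      rcases ih v' hv'len hv'head hv'chain hv'pos with ⟨a', ha'pos, ha'⟩
      refine ⟨k :: a', ?_, ?_⟩
      · intro x hx
        rcases List.mem_cons.1 hx with rfl | hx
        · exact hkpos
        · exact ha'pos x hx
      · rw [rgfWord_cons, ha', hv', ← huv, hurep, List.map_map]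
        congr 1
        rw [List.map_congr_left (f := (· + 1) ∘ (· - 1)) (g := id)
          (fun x hx => by have := hvge x hx; simp; omega)]
        simp

lemma rgf_inj : ∀ a b : List ℕ, (∀ x ∈ a, 0 < x) → (∀ x ∈ b, 0 < x) →
    rgfWord a = rgfWord b → a = b := by
  intro a
  induction a with
  | nil =>
    intro b _ hb h
    rcases b with _ | ⟨k, l⟩
    · rfl
    · exfalso
      have h1 : (rgfWord []).length = 0 := rfl
      have h2 : (rgfWord (k :: l)).length = k + l.sum := by
        rw [rgfWord_length]; simp
      have hk := hb k (by simp)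
      rw [h] at h1
      omega
  | cons k l ihl =>
    intro b ha hb h
    rcases b with _ | ⟨k', l'⟩
    · exfalso
      have h1 : (rgfWord []).length = 0 := rfl
      have h2 : (rgfWord (k :: l)).length = k + l.sum := by
        rw [rgfWord_length]; simp
      have hk := ha k (by simp)
      rw [← h] at h1
      omega
    · rw [rgfWord_cons, rgfWord_cons] at h
      have hcount : ∀ (j : ℕ) (x : List ℕ),
          (List.replicate j 1 ++ (rgfWord x).map (· + 1)).count 1 = j := by
        intro j x
        rw [List.count_append, List.count_replicate]
        norm_num
        have : ((rgfWord x).map (· + 1)).count 1 = 0 := by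
          rw [List.count_eq_zero]
          intro hmem
          rcases List.mem_map.1 hmem with ⟨z, hz, hze⟩
          have := rgfWord_pos x z hz
          omega
        omega
      have hkk : k = k' := by
        have := hcount k l
        rw [h, hcount k' l'] at this
        omega
      subst hkk
      have htail : (rgfWord l).map (· + 1) = (rgfWord l').map (· + 1) :=
        List.append_cancel_left h
      have : rgfWord l = rgfWord l' :=
        List.map_injective_iff.2 (fun x y hxy => by omega) htail
      rw [ihl l' (fun x hx => ha x (by simp [hx])) (fun x hx => hb x (by simp [hx])) this]

end RGF121


namespace RGF121

lemma mem_target_iff (n : ℕ) (w : List ℕ) :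
    (w.length = n ∧ IsRGF w ∧ ¬ ContainsPat w [1, 2, 1]) ↔
      ∃ a : List ℕ, IsComposition n a ∧ rgfWord a = w := by
  constructor
  · rintro ⟨hlen, hr, hnc⟩
    have hc := chain_of_rgf_avoid hr hnc
    have hh : ∀ z ∈ w.head?, z = 1 := by
      intro z hz
      have hne : w ≠ [] := by
        intro h; rw [h] at hz; simp at hz
      have hlpos : 0 < w.length := List.length_pos_iff.2 hne
      have h0 := hr 0 hlpos
      simp at h0
      have : w.head? = some (w[0]!) := by
        rw [List.head?_eq_head hne, List.head_eq_getElem, getElem!_pos w 0 hlpos]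
      rw [this] at hz
      simp at hz
      omega
    have hpos : ∀ x ∈ w, 1 ≤ x := by
      intro x hx
      rcases List.mem_iff_getElem.1 hx with ⟨j, hj, rfl⟩
      have := (hr j hj).1
      rwa [getElem!_pos w j hj] at this
    rcases recon w.length w (le_refl _) hh hc hpos with ⟨a, hapos, hae⟩
    refine ⟨a, ⟨hapos, ?_⟩, hae⟩
    rw [← rgfWord_length, hae, hlen]
  · rintro ⟨a, ⟨hapos, hasum⟩, rfl⟩
    have hc := rgfWord_chain a hapos
    refine ⟨?_, isRGF_of (rgfWord_head a hapos) hc, not_contains_of_chain hc⟩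
    rw [rgfWord_length, hasum]

end RGF121

theorem rgf_avoiding_121 :
    ∀ n : ℕ, 1 ≤ n →
      Set.BijOn rgfWord {a | IsComposition n a}
          {w | w.length = n ∧ IsRGF w ∧ ¬ ContainsPat w [1, 2, 1]} ∧
        {w | w.length = n ∧ IsRGF w ∧ ¬ ContainsPat w [1, 2, 1]}.ncard = 2 ^ (n - 1) := by
  intro n _hn
  have hinj : Set.InjOn rgfWord {a | IsComposition n a} := by
    intro a1 h1 a2 h2 he
    exact RGF121.rgf_inj a1 a2 h1.1 h2.1 he
  have hbij : Set.BijOn rgfWord {a | IsComposition n a}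
      {w | w.length = n ∧ IsRGF w ∧ ¬ ContainsPat w [1, 2, 1]} := by
    refine ⟨?_, hinj, ?_⟩
    · intro a ha
      exact (RGF121.mem_target_iff n (rgfWord a)).2 ⟨a, ha, rfl⟩
    · intro w hw
      rcases (RGF121.mem_target_iff n w).1 hw with ⟨a, ha, hae⟩
      exact ⟨a, ha, hae⟩
  refine ⟨hbij, ?_⟩
  rw [← hbij.image_eq, Set.ncard_image_of_injOn hinj]
  have hset : {a | IsComposition n a} = Set.range (fun c : Composition n => c.blocks) := by
    ext b
    constructor
    · rintro ⟨hpos, hsum⟩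
      exact ⟨⟨b, fun {i} hi => hpos i hi, hsum⟩, rfl⟩
    · rintro ⟨c, rfl⟩
      exact ⟨fun x hx => c.blocks_pos hx, c.blocks_sum⟩
  have hblocks_inj : Function.Injective (fun c : Composition n => c.blocks) := by
    intro c1 c2 h
    cases c1; cases c2; simpa using h
  rw [hset, ← Set.image_univ, Set.ncard_image_of_injOn hblocks_inj.injOn,
    Set.ncard_univ, Nat.card_eq_fintype_card, composition_card]
end

section
/- Let a = (a_1,...,a_m) and b = (b_1,...,b_k) be compositions. The 121-avoiding set partition with RGF 1^{b_1}2^{b_2}...k^{b_k} contains the pattern 1^{a_1}2^{a_2}...m^{a_m} if and only if b dominates a, i.e., b has a subsequence (b_{i(1)},...,b_{i(m)}) with b_{i(j)} ≥ a_j for all j. -/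
/- ### Auxiliary definitions and lemmas -/

/-- The block word with values shifted by `k`. -/
def wfAux : ℕ → List ℕ → List ℕ
  | _, [] => []
  | k, x :: xs => List.replicate x (k + 1) ++ wfAux (k + 1) xs

lemma wfAux_eq (a : List ℕ) : ∀ k,
    wfAux k a = (a.zipIdx k).flatMap fun p => List.replicate p.1 (p.2 + 1) := by
  induction a with
  | nil => intro k; simp [wfAux]
  | cons x xs ih => intro k; simp [wfAux, List.zipIdx_cons, ih]

lemma rgf_eq_wfAux (a : List ℕ) : rgfWord a = wfAux 0 a := by
  rw [rgfWord, wfAux_eq]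

lemma mem_wfAux : ∀ (a : List ℕ) (k x : ℕ), x ∈ wfAux k a → k < x := by
  intro a
  induction a with
  | nil => intro k x h; simp [wfAux] at h
  | cons y ys ih =>
    intro k x h
    simp only [wfAux, List.mem_append, List.mem_replicate] at h
    rcases h with ⟨-, rfl⟩ | h
    · omega
    · have := ih (k + 1) x h; omega

/-- The matching (pattern-isomorphism) condition. -/
def Pat (w p : List ℕ) : Prop :=
  w.length = p.length ∧ ∀ i < p.length, ∀ j < p.length,
    (w[i]! = w[j]! ↔ p[i]! = p[j]!) ∧ (w[i]! < w[j]! ↔ p[i]! < p[j]!)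

lemma getbang (l : List ℕ) (i : ℕ) (h : i < l.length) : l[i]! = l[i] :=
  getElem!_pos l i h

lemma pat_nil : Pat [] [] := by
  refine ⟨rfl, ?_⟩
  intro i hi
  simp at hi

lemma get_rep_app (n c : ℕ) (l : List ℕ) (i : ℕ) (h : i < n + l.length) :
    (List.replicate n c ++ l)[i]! = if i < n then c else l[i - n]! := by
  have hlen : i < (List.replicate n c ++ l).length := by simp; omega
  rw [getbang _ _ hlen]
  split
  · rename_i h'
    rw [List.getElem_append_left (by simpa using h')]
    simp
  · rename_i h'
    have h2 : n ≤ i := le_of_not_gt h'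
    rw [List.getElem_append_right (by simpa using h2)]
    rw [getbang _ _ (by omega)]
    simp

lemma pat_append {w2 p2 : List ℕ} (n : ℕ) {u v : ℕ}
    (hw : ∀ x ∈ w2, u < x) (hp : ∀ x ∈ p2, v < x) (h : Pat w2 p2) :
    Pat (List.replicate n u ++ w2) (List.replicate n v ++ p2) := by
  obtain ⟨hlen, hpat⟩ := h
  have hw' : ∀ i, i < w2.length → u < w2[i]! := fun i hi => by
    rw [getbang _ _ hi]; exact hw _ (List.getElem_mem hi)
  have hp' : ∀ i, i < p2.length → v < p2[i]! := fun i hi => by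
    rw [getbang _ _ hi]; exact hp _ (List.getElem_mem hi)
  refine ⟨by simp [hlen], ?_⟩
  intro i hi j hj
  simp only [List.length_append, List.length_replicate] at hi hj
  rw [get_rep_app n u w2 i (by omega), get_rep_app n u w2 j (by omega),
      get_rep_app n v p2 i (by omega), get_rep_app n v p2 j (by omega)]
  by_cases hin : i < n <;> by_cases hjn : j < n <;> simp only [hin, hjn, if_true, if_false,
    if_pos, if_neg, not_false_iff]
  · simp
  · have h1 := hw' (j - n) (by omega)
    have h2 := hp' (j - n) (by omega)
    constructor <;> constructor <;> intro hx <;> omega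
  · have h1 := hw' (i - n) (by omega)
    have h2 := hp' (i - n) (by omega)
    constructor <;> constructor <;> intro hx <;> omega
  · exact hpat (i - n) (by omega) (j - n) (by omega)

lemma pat_drop {w p : List ℕ} (n : ℕ) (h : Pat w p) : Pat (w.drop n) (p.drop n) := by
  obtain ⟨hlen, hpat⟩ := h
  have key : ∀ (l : List ℕ) (i : ℕ), i < l.length - n → (l.drop n)[i]! = l[n + i]! := by
    intro l i hi
    rw [getbang _ _ (by simp [List.length_drop]; omega), List.getElem_drop,
      getbang _ _ (by omega)]
  refine ⟨by simp [hlen], ?_⟩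
  intro i hi j hj
  simp only [List.length_drop] at hi hj
  rw [key w i (by omega), key w j (by omega), key p i (by omega), key p j (by omega)]
  exact hpat (n + i) (by omega) (n + j) (by omega)

lemma fwd {b' b : List ℕ} (hs : b'.Sublist b) :
    ∀ a, List.Forall₂ (· ≤ ·) a b' → ∀ k j, ∃ w', w'.Sublist (wfAux k b) ∧ Pat w' (wfAux j a) := by
  induction hs with
  | slnil =>
    intro a hf k j
    cases hf
    exact ⟨[], List.nil_sublist _, pat_nil⟩
  | cons x h ih =>
    intro a hf k j
    obtain ⟨w', hw1, hw2⟩ := ih a hf (k + 1) j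
    exact ⟨w', hw1.trans (List.sublist_append_right _ _), hw2⟩
  | cons_cons x h ih =>
    intro a hf k j
    cases hf with
    | cons ha hf' =>
      rename_i a1 as
      obtain ⟨w2, hw1, hw2⟩ := ih as hf' (k + 1) (j + 1)
      refine ⟨List.replicate a1 (k + 1) ++ w2, ?_, ?_⟩
      · exact List.Sublist.append ((List.replicate_sublist_replicate _).2 ha) hw1
      · exact pat_append a1 (fun x hx => mem_wfAux _ _ _ (hw1.subset hx))
          (fun x hx => mem_wfAux _ _ _ hx) hw2

lemma rev : ∀ (b a w' : List ℕ) (k j : ℕ), (∀ x ∈ a, 0 < x) →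
    w'.Sublist (wfAux k b) → Pat w' (wfAux j a) → Dominates b a := by
  intro b
  induction b with
  | nil =>
    intro a w' k j ha hs hp
    have hw : w' = [] := List.sublist_nil.mp hs
    subst hw
    cases a with
    | nil => exact ⟨[], List.nil_sublist _, List.Forall₂.nil⟩
    | cons a1 as =>
      exfalso
      have hl := hp.1
      have ha1 := ha a1 (by simp)
      simp [wfAux] at hl
      omega
  | cons b1 bs ih =>
    intro a w' k j ha hs hp
    cases a with
    | nil => exact ⟨[], List.nil_sublist _, List.Forall₂.nil⟩
    | cons a1 as =>
      rw [show wfAux k (b1 :: bs) = List.replicate b1 (k + 1) ++ wfAux (k + 1) bs from rfl] at hs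
      obtain ⟨w1, w2, rfl, hs1, hs2⟩ := List.sublist_append_iff.mp hs
      obtain ⟨t, ht, rfl⟩ := List.sublist_replicate_iff.mp hs1
      by_cases ht0 : t = 0
      · subst ht0
        obtain ⟨b'', h1, h2⟩ := ih (a1 :: as) w2 (k + 1) j ha hs2 (by simpa using hp)
        exact ⟨b'', h1.cons _, h2⟩
      · -- t > 0 : show t = a1
        have ha1 : 0 < a1 := ha a1 (by simp)
        set L := (wfAux (j + 1) as).length with hL
        have hP : wfAux j (a1 :: as) = List.replicate a1 (j + 1) ++ wfAux (j + 1) as := rfl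
        rw [hP] at hp
        obtain ⟨hlen, hpat⟩ := hp
        simp only [List.length_append, List.length_replicate, ← hL] at hlen
        have hw2mem : ∀ i, i < w2.length → k + 1 < w2[i]! := by
          intro i hi
          rw [getbang _ _ hi]
          exact mem_wfAux _ _ _ (hs2.subset (List.getElem_mem hi))
        have hpmem : ∀ i, i < L → j + 1 < (wfAux (j + 1) as)[i]! := by
          intro i hi
          rw [getbang _ _ hi]
          exact mem_wfAux _ _ _ (List.getElem_mem hi)
        have hplen : (List.replicate a1 (j + 1) ++ wfAux (j + 1) as).length = a1 + L := by
          simp [hL]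
        have hgetw : ∀ i, i < t + w2.length →
            (List.replicate t (k + 1) ++ w2)[i]! = if i < t then k + 1 else w2[i - t]! :=
          fun i hi => get_rep_app t (k + 1) w2 i hi
        have hgetp : ∀ i, i < a1 + L →
            (List.replicate a1 (j + 1) ++ wfAux (j + 1) as)[i]! =
              if i < a1 then j + 1 else (wfAux (j + 1) as)[i - a1]! :=
          fun i hi => get_rep_app a1 (j + 1) _ i (by simpa [hL] using hi)
      -- t ≤ a1
        have hta : t ≤ a1 := by
          by_contra hcon
          push_neg at hcon
          have h0 := hpat 0 (by rw [hplen]; omega) a1 (by rw [hplen]; omega)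
          rw [hgetw 0 (by omega), hgetw a1 (by omega), hgetp 0 (by omega),
            hgetp a1 (by omega)] at h0
          simp only [if_pos (by omega : (0:ℕ) < t), if_pos (by omega : (0:ℕ) < a1),
            if_pos hcon, if_neg (lt_irrefl a1)] at h0
          have := hpmem (a1 - a1) (by omega)
          omega
        have hat : a1 ≤ t := by
          by_contra hcon
          push_neg at hcon
          have h0 := hpat 0 (by rw [hplen]; omega) t (by rw [hplen]; omega)
          rw [hgetw 0 (by omega), hgetw t (by omega), hgetp 0 (by omega),
            hgetp t (by omega)] at h0
          simp only [if_pos (by omega : (0:ℕ) < t), if_pos (by omega : (0:ℕ) < a1),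
            if_pos hcon, if_neg (lt_irrefl t)] at h0
          have := hw2mem (t - t) (by omega)
          omega
        have hte : t = a1 := le_antisymm hta hat
        subst hte
        have hdrop := pat_drop t ⟨by simpa [hL] using hlen, hpat⟩
        rw [List.drop_left' (by simp), List.drop_left' (by simp)] at hdrop
        obtain ⟨b'', h1, h2⟩ := ih as w2 (k + 1) (j + 1) (fun x hx => ha x (by simp [hx])) hs2 hdrop
        exact ⟨b1 :: b'', h1.cons₂ _, List.Forall₂.cons ht h2⟩

theorem contains_iff_dominates (a b : List ℕ)
    (ha : ∀ x ∈ a, 0 < x) (hb : ∀ x ∈ b, 0 < x) :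
    ContainsPat (rgfWord b) (rgfWord a) ↔ Dominates b a := by
  rw [rgf_eq_wfAux a, rgf_eq_wfAux b]
  constructor
  · rintro ⟨w', h1, h2, h3⟩
    exact rev b a w' 0 0 ha h1 ⟨h2, h3⟩
  · rintro ⟨b', hs, hf⟩
    obtain ⟨w', h1, h2⟩ := fwd hs a hf 0 0
    exact ⟨w', h1, h2.1, h2.2⟩
end
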